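/- (Theorem 3, Lasso case) Let p ≥ n, τ > 0, X = UDVᵀ with U orthogonal, F_τ = U(D²+τI)^{−1/2}Uᵀ, 𝒫_τ(v) = Xᵀ(XXᵀ+τI)⁻¹Xv, and β̂_ridge(τ) = (XᵀX+τI)⁻¹XᵀY. If β̂ minimizes b ↦ ½‖F_τY − F_τXb‖₂² + λ‖b‖₁, then for each j: if β̂_j ≠ 0 then β̂_ridge,j(τ) − 𝒫_τ(β̂)_j = λ·sign(β̂_j), and if β̂_j = 0 then |β̂_ridge,j(τ) − 𝒫_τ(β̂)_j| ≤ λ. -/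

import Mathlib

open Matrix BigOperators


lemma lasso_kkt_aux (C M lam β : ℝ) (hM : 0 ≤ M) (hlam : 0 ≤ lam)
    (key : ∀ t : ℝ, t * C ≤ t ^ 2 / 2 * M + lam * (|β + t| - |β|)) :
    (β ≠ 0 → C = lam * Real.sign β) ∧ (β = 0 → |C| ≤ lam) := by
  have hMd : (0:ℝ) < M + 1 := by linarith
  have divpos : ∀ t R : ℝ, 0 < t → t * C ≤ t * R → C ≤ R := fun t R ht h =>
    le_of_mul_le_mul_left h ht
  have divneg : ∀ t R : ℝ, t < 0 → t * C ≤ t * R → R ≤ C := fun t R ht h =>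
    le_of_mul_le_mul_left (by nlinarith) (neg_pos.mpr ht)
  have upper : ∀ δ : ℝ, 0 < δ → (∀ t : ℝ, 0 < t → t ≤ δ → |β + t| - |β| = t) →
      ∀ ε : ℝ, 0 < ε → C ≤ lam + ε := by
    intro δ hδ habs ε hε
    set t : ℝ := min (2 * ε / (M + 1)) δ with ht
    have ht0 : 0 < t := lt_min (by positivity) hδ
    have ht1 : t ≤ 2 * ε / (M + 1) := min_le_left _ _
    have ht2 : t ≤ δ := min_le_right _ _
    clear_value t
    have h2 : t * (M + 1) ≤ 2 * ε := (le_div_iff₀ hMd).mp ht1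
    have hk := key t
    rw [habs t ht0 ht2] at hk
    have hk' : t * C ≤ t * (t / 2 * M + lam) := by nlinarith [hk]
    have := divpos t _ ht0 hk'
    have htM : t * M ≤ 2 * ε := by nlinarith
    nlinarith
  have lower : ∀ δ : ℝ, 0 < δ → (∀ t : ℝ, -δ ≤ t → t < 0 → |β + t| - |β| = t) →
      ∀ ε : ℝ, 0 < ε → lam ≤ C + ε := by
    intro δ hδ habs ε hε
    set t : ℝ := -min (2 * ε / (M + 1)) δ with ht
    have hm0 : (0:ℝ) < min (2 * ε / (M + 1)) δ := lt_min (by positivity) hδ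
    have ht0 : t < 0 := by rw [ht]; exact neg_neg_of_pos hm0
    have ht1 : -t ≤ 2 * ε / (M + 1) := by rw [ht, neg_neg]; exact min_le_left _ _
    have ht2 : -δ ≤ t := by
      rw [ht]; simp only [neg_le_neg_iff]; exact min_le_right _ _
    clear_value t
    have h2 : (-t) * (M + 1) ≤ 2 * ε := (le_div_iff₀ hMd).mp ht1
    have hk := key t
    rw [habs t ht2 ht0] at hk
    have hk' : t * C ≤ t * (t / 2 * M + lam) := by nlinarith [hk]
    have := divneg t _ ht0 hk'
    have htM : (-t) * M ≤ 2 * ε := by nlinarith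
    nlinarith
  have upper' : ∀ δ : ℝ, 0 < δ → (∀ t : ℝ, 0 < t → t ≤ δ → |β + t| - |β| = -t) →
      ∀ ε : ℝ, 0 < ε → C ≤ -lam + ε := by
    intro δ hδ habs ε hε
    set t : ℝ := min (2 * ε / (M + 1)) δ with ht
    have ht0 : 0 < t := lt_min (by positivity) hδ
    have ht1 : t ≤ 2 * ε / (M + 1) := min_le_left _ _
    have ht2 : t ≤ δ := min_le_right _ _
    clear_value t
    have h2 : t * (M + 1) ≤ 2 * ε := (le_div_iff₀ hMd).mp ht1
    have hk := key t
    rw [habs t ht0 ht2] at hk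
    have hk' : t * C ≤ t * (t / 2 * M + -lam) := by nlinarith [hk]
    have := divpos t _ ht0 hk'
    have htM : t * M ≤ 2 * ε := by nlinarith
    nlinarith
  have lower' : ∀ δ : ℝ, 0 < δ → (∀ t : ℝ, -δ ≤ t → t < 0 → |β + t| - |β| = -t) →
      ∀ ε : ℝ, 0 < ε → -lam ≤ C + ε := by
    intro δ hδ habs ε hε
    set t : ℝ := -min (2 * ε / (M + 1)) δ with ht
    have hm0 : (0:ℝ) < min (2 * ε / (M + 1)) δ := lt_min (by positivity) hδ
    have ht0 : t < 0 := by rw [ht]; exact neg_neg_of_pos hm0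
    have ht1 : -t ≤ 2 * ε / (M + 1) := by rw [ht, neg_neg]; exact min_le_left _ _
    have ht2 : -δ ≤ t := by
      rw [ht]; simp only [neg_le_neg_iff]; exact min_le_right _ _
    clear_value t
    have h2 : (-t) * (M + 1) ≤ 2 * ε := (le_div_iff₀ hMd).mp ht1
    have hk := key t
    rw [habs t ht2 ht0] at hk
    have hk' : t * C ≤ t * (t / 2 * M + -lam) := by nlinarith [hk]
    have := divneg t _ ht0 hk'
    have htM : (-t) * M ≤ 2 * ε := by nlinarith
    nlinarith
  constructor
  · intro hβ
    rcases hβ.lt_or_gt with hneg | hpos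
    · rw [Real.sign_of_neg hneg]
      have h1 : C ≤ -lam := le_of_forall_pos_le_add (upper' (-β / 2) (by linarith)
        (fun t ht0 ht1 => by
          rw [abs_of_neg hneg, abs_of_neg (show β + t < 0 by linarith)]; ring))
      have h2 : -lam ≤ C := by
        have := lower' 1 one_pos (fun t ht0 ht1 => by
          rw [abs_of_neg hneg, abs_of_neg (show β + t < 0 by linarith)]; ring)
        linarith [le_of_forall_pos_le_add (fun ε hε => by linarith [this ε hε] : ∀ ε > (0:ℝ), -lam ≤ C + ε)]
      linarith
    · rw [Real.sign_of_pos hpos]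
      have h1 : C ≤ lam := le_of_forall_pos_le_add (upper 1 one_pos
        (fun t ht0 ht1 => by
          rw [abs_of_pos hpos, abs_of_pos (show 0 < β + t by linarith)]; ring))
      have h2 : lam ≤ C := by
        have := lower (β / 2) (by linarith) (fun t ht0 ht1 => by
          rw [abs_of_pos hpos, abs_of_pos (show 0 < β + t by linarith)]; ring)
        linarith [le_of_forall_pos_le_add (fun ε hε => by linarith [this ε hε] : ∀ ε > (0:ℝ), lam ≤ C + ε)]
      linarith
  · intro hβ
    subst hβ
    rw [abs_le]
    constructor
    · have := lower' 1 one_pos (fun t ht0 ht1 => by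
        rw [zero_add, abs_of_neg ht1]; simp)
      linarith [le_of_forall_pos_le_add (fun ε hε => by linarith [this ε hε] : ∀ ε > (0:ℝ), -lam ≤ C + ε)]
    · exact le_of_forall_pos_le_add (upper 1 one_pos (fun t ht0 ht1 => by
        rw [zero_add, abs_of_pos ht0]; simp))

/-- (Theorem 3, Lasso case) If `β̂` minimizes the preconditioned Lasso objective
`½‖F_τY − F_τXb‖₂² + λ‖b‖₁`, then coordinatewise the ridge estimator and
`𝒫_τ(β̂)` differ by at most `λ`, with equality structure given by the sign. -/
theorem preconditioned_lasso_close_to_ridge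
    {n p : ℕ} (hnp : n ≤ p)
    (X : Matrix (Fin n) (Fin p) ℝ) (U : Matrix (Fin n) (Fin n) ℝ)
    (V : Matrix (Fin p) (Fin n) ℝ) (d : Fin n → ℝ)
    (hU : U * Uᵀ = 1) (hU' : Uᵀ * U = 1) (hV : Vᵀ * V = 1)
    (hX : X = U * Matrix.diagonal d * Vᵀ)
    (tau : ℝ) (htau : 0 < tau)
    (F : Matrix (Fin n) (Fin n) ℝ)
    (hF : F = U * Matrix.diagonal (fun i => (Real.sqrt (d i ^ 2 + tau))⁻¹) * Uᵀ)
    (Y : Fin n → ℝ) (lam : ℝ) (hlam : 0 ≤ lam)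
    (betaHat : Fin p → ℝ)
    (hmin : ∀ b : Fin p → ℝ,
      (1 / 2) * ∑ i, (F.mulVec Y i - (F * X).mulVec betaHat i) ^ 2
          + lam * ∑ j, |betaHat j|
        ≤ (1 / 2) * ∑ i, (F.mulVec Y i - (F * X).mulVec b i) ^ 2
          + lam * ∑ j, |b j|)
    (ridge : Fin p → ℝ)
    (hridge : ridge = (Xᵀ * X + tau • (1 : Matrix (Fin p) (Fin p) ℝ))⁻¹.mulVec
        (Xᵀ.mulVec Y))
    (Pbeta : Fin p → ℝ)
    (hP : Pbeta = Xᵀ.mulVec ((X * Xᵀ + tau • (1 : Matrix (Fin n) (Fin n) ℝ))⁻¹.mulVec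
        (X.mulVec betaHat))) :
    ∀ j : Fin p,
      (betaHat j ≠ 0 → ridge j - Pbeta j = lam * Real.sign (betaHat j)) ∧
      (betaHat j = 0 → |ridge j - Pbeta j| ≤ lam) := by
  have htau0 : tau ≠ 0 := ne_of_gt htau
  have hpos : ∀ i, (0:ℝ) < d i ^ 2 + tau := fun i => by positivity
  set g : Fin n → ℝ := fun i => (d i ^ 2 + tau)⁻¹ with hg
  set G : Matrix (Fin n) (Fin n) ℝ := U * Matrix.diagonal g * Uᵀ with hG
  have sandU : ∀ a b : Fin n → ℝ,
      (U * Matrix.diagonal a * Uᵀ) * (U * Matrix.diagonal b * Uᵀ)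
        = U * Matrix.diagonal (fun i => a i * b i) * Uᵀ := by
    intro a b
    have h1 : (U * Matrix.diagonal a * Uᵀ) * (U * Matrix.diagonal b * Uᵀ)
        = U * Matrix.diagonal a * (Uᵀ * U) * (Matrix.diagonal b * Uᵀ) := by
      simp only [Matrix.mul_assoc]
    rw [h1, hU', Matrix.mul_one, Matrix.mul_assoc U, ← Matrix.mul_assoc (Matrix.diagonal a),
      Matrix.diagonal_mul_diagonal, ← Matrix.mul_assoc]
  have hFt : Fᵀ = F := by
    rw [hF]
    simp [Matrix.transpose_mul, Matrix.diagonal_transpose, Matrix.mul_assoc]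
  have hFF : F * F = G := by
    have hfun : (fun i => (Real.sqrt (d i ^ 2 + tau))⁻¹ * (Real.sqrt (d i ^ 2 + tau))⁻¹) = g := by
      funext i
      rw [← mul_inv, Real.mul_self_sqrt (hpos i).le]
    rw [hF, sandU, hfun, hG]
  have hXt : Xᵀ = V * Matrix.diagonal d * Uᵀ := by
    rw [hX]
    simp [Matrix.transpose_mul, Matrix.diagonal_transpose, Matrix.mul_assoc]
  have hdd : (fun i => d i * d i) = fun i => d i ^ 2 := by
    funext i; rw [pow_two]
  have hXXt : X * Xᵀ = U * Matrix.diagonal (fun i => d i ^ 2) * Uᵀ := by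
    rw [hXt, hX]
    have h1 : U * Matrix.diagonal d * Vᵀ * (V * Matrix.diagonal d * Uᵀ)
        = U * Matrix.diagonal d * (Vᵀ * V) * (Matrix.diagonal d * Uᵀ) := by
      simp only [Matrix.mul_assoc]
    rw [h1, hV, Matrix.mul_one, Matrix.mul_assoc U, ← Matrix.mul_assoc (Matrix.diagonal d),
      Matrix.diagonal_mul_diagonal, hdd, ← Matrix.mul_assoc]
  have hsmul1 : ∀ (m : ℕ) (c : ℝ), (c • (1 : Matrix (Fin m) (Fin m) ℝ))
      = Matrix.diagonal (fun _ => c) := by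
    intro m c
    ext i j
    rw [Matrix.smul_apply, Matrix.one_apply, Matrix.diagonal_apply]
    split <;> simp
  have hsand_tau : U * Matrix.diagonal (fun _ : Fin n => tau) * Uᵀ
      = tau • (1 : Matrix (Fin n) (Fin n) ℝ) := by
    rw [← hsmul1, Matrix.mul_smul, Matrix.smul_mul, Matrix.mul_one, hU]
  have hdiagsplit : Matrix.diagonal (fun i => d i ^ 2 + tau)
      = Matrix.diagonal (fun i => d i ^ 2) + Matrix.diagonal (fun _ : Fin n => tau) := by
    rw [← Matrix.diagonal_add]
  have hXXtau : X * Xᵀ + tau • (1 : Matrix (Fin n) (Fin n) ℝ)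
      = U * Matrix.diagonal (fun i => d i ^ 2 + tau) * Uᵀ := by
    rw [hXXt, hdiagsplit, Matrix.mul_add, Matrix.add_mul, hsand_tau]
  have hinvn : (X * Xᵀ + tau • (1 : Matrix (Fin n) (Fin n) ℝ))⁻¹ = G := by
    apply Matrix.inv_eq_right_inv
    rw [hXXtau, hG, sandU]
    have hone : (fun i => (d i ^ 2 + tau) * g i) = fun _ => 1 := by
      funext i; rw [hg]; field_simp
    rw [hone, Matrix.diagonal_one, Matrix.mul_one, hU]
  -- p side
  set e : Fin n → ℝ := fun i => d i ^ 2 * (d i ^ 2 + tau)⁻¹ with he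
  set Q : Matrix (Fin p) (Fin p) ℝ := V * Matrix.diagonal e * Vᵀ with hQ
  set Mp : Matrix (Fin p) (Fin p) ℝ := tau⁻¹ • ((1 : Matrix (Fin p) (Fin p) ℝ) - Q) with hMp
  have sandV : ∀ a b : Fin n → ℝ,
      (V * Matrix.diagonal a * Vᵀ) * (V * Matrix.diagonal b * Vᵀ)
        = V * Matrix.diagonal (fun i => a i * b i) * Vᵀ := by
    intro a b
    have h1 : (V * Matrix.diagonal a * Vᵀ) * (V * Matrix.diagonal b * Vᵀ)
        = V * Matrix.diagonal a * (Vᵀ * V) * (Matrix.diagonal b * Vᵀ) := by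
      simp only [Matrix.mul_assoc]
    rw [h1, hV, Matrix.mul_one, Matrix.mul_assoc V, ← Matrix.mul_assoc (Matrix.diagonal a),
      Matrix.diagonal_mul_diagonal, ← Matrix.mul_assoc]
  have hXtX : Xᵀ * X = V * Matrix.diagonal (fun i => d i ^ 2) * Vᵀ := by
    rw [hXt, hX]
    have h1 : V * Matrix.diagonal d * Uᵀ * (U * Matrix.diagonal d * Vᵀ)
        = V * Matrix.diagonal d * (Uᵀ * U) * (Matrix.diagonal d * Vᵀ) := by
      simp only [Matrix.mul_assoc]
    rw [h1, hU', Matrix.mul_one, Matrix.mul_assoc V, ← Matrix.mul_assoc (Matrix.diagonal d),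
      Matrix.diagonal_mul_diagonal, hdd, ← Matrix.mul_assoc]
  have hPQ : (Xᵀ * X) * Q = V * Matrix.diagonal (fun i => d i ^ 2 * e i) * Vᵀ := by
    rw [hXtX, hQ, sandV]
  have hQs : tau • Q = V * Matrix.diagonal (fun i => tau * e i) * Vᵀ := by
    rw [hQ, ← Matrix.smul_mul, ← Matrix.mul_smul, ← Matrix.diagonal_smul]
    congr 1
  have hsplit : Matrix.diagonal (fun i => d i ^ 2)
      = Matrix.diagonal (fun i => d i ^ 2 * e i) + Matrix.diagonal (fun i => tau * e i) := by
    have hef : (fun i => d i ^ 2) = fun i => d i ^ 2 * e i + tau * e i := by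
      funext i
      simp only [he]
      field_simp
    rw [Matrix.diagonal_add, hef]
  have hexp : (Xᵀ * X + tau • (1 : Matrix (Fin p) (Fin p) ℝ)) * (1 - Q)
      = tau • (1 : Matrix (Fin p) (Fin p) ℝ) := by
    rw [mul_sub, mul_one, add_mul, Matrix.smul_mul, one_mul, hPQ, hQs, hXtX, hsplit,
      Matrix.mul_add, Matrix.add_mul]
    abel
  have hinvp : (Xᵀ * X + tau • (1 : Matrix (Fin p) (Fin p) ℝ))⁻¹ = Mp := by
    apply Matrix.inv_eq_right_inv
    rw [hMp, Matrix.mul_smul, hexp, smul_smul, inv_mul_cancel₀ htau0, one_smul]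
  -- Mp * Xᵀ = Xᵀ * G
  have sandVU : ∀ a b : Fin n → ℝ,
      (V * Matrix.diagonal a * Vᵀ) * (V * Matrix.diagonal b * Uᵀ)
        = V * Matrix.diagonal (fun i => a i * b i) * Uᵀ := by
    intro a b
    have h1 : (V * Matrix.diagonal a * Vᵀ) * (V * Matrix.diagonal b * Uᵀ)
        = V * Matrix.diagonal a * (Vᵀ * V) * (Matrix.diagonal b * Uᵀ) := by
      simp only [Matrix.mul_assoc]
    rw [h1, hV, Matrix.mul_one, Matrix.mul_assoc V, ← Matrix.mul_assoc (Matrix.diagonal a),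
      Matrix.diagonal_mul_diagonal, ← Matrix.mul_assoc]
  have sandUU : ∀ a b : Fin n → ℝ,
      (V * Matrix.diagonal a * Uᵀ) * (U * Matrix.diagonal b * Uᵀ)
        = V * Matrix.diagonal (fun i => a i * b i) * Uᵀ := by
    intro a b
    have h1 : (V * Matrix.diagonal a * Uᵀ) * (U * Matrix.diagonal b * Uᵀ)
        = V * Matrix.diagonal a * (Uᵀ * U) * (Matrix.diagonal b * Uᵀ) := by
      simp only [Matrix.mul_assoc]
    rw [h1, hU', Matrix.mul_one, Matrix.mul_assoc V, ← Matrix.mul_assoc (Matrix.diagonal a),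
      Matrix.diagonal_mul_diagonal, ← Matrix.mul_assoc]
  have hMpXt : Mp * Xᵀ = Xᵀ * G := by
    have hsub : Xᵀ - Q * Xᵀ = V * Matrix.diagonal (fun i => d i - e i * d i) * Uᵀ := by
      rw [hXt, hQ, sandVU, ← Matrix.diagonal_sub, ← Matrix.sub_mul, ← Matrix.mul_sub]
    have hfun : (tau⁻¹ • fun i => d i - e i * d i) = fun i => d i * g i := by
      funext i
      simp only [he, hg, Pi.smul_apply, smul_eq_mul]
      field_simp
      ring
    rw [hMp, Matrix.smul_mul, Matrix.sub_mul, Matrix.one_mul, hsub,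
      ← Matrix.smul_mul, ← Matrix.mul_smul, ← Matrix.diagonal_smul, hfun, hXt, hG, sandUU]
  -- identities relating ridge and Pbeta to the preconditioned design
  have hAtF : (F * X)ᵀ * F = Xᵀ * G := by
    rw [Matrix.transpose_mul, hFt, Matrix.mul_assoc, hFF]
  have hAtA : (F * X)ᵀ * (F * X) = Xᵀ * G * X := by
    calc (F * X)ᵀ * (F * X) = Xᵀ * F * (F * X) := by rw [Matrix.transpose_mul, hFt]
      _ = Xᵀ * (F * F) * X := by simp only [Matrix.mul_assoc]
      _ = Xᵀ * G * X := by rw [hFF]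
  have hridge' : ridge = ((F * X)ᵀ * F).mulVec Y := by
    rw [hridge, hinvp, Matrix.mulVec_mulVec, hMpXt, hAtF]
  have hP' : Pbeta = ((F * X)ᵀ * (F * X)).mulVec betaHat := by
    rw [hP, hinvn, Matrix.mulVec_mulVec, Matrix.mulVec_mulVec, hAtA, Matrix.mul_assoc]
  intro j
  set c : ℝ := ∑ i, (F * X) i j * (F.mulVec Y i - (F * X).mulVec betaHat i) with hc
  have hCc : ridge j - Pbeta j = c := by
    rw [hridge', hP', ← Matrix.mulVec_mulVec, ← Matrix.mulVec_mulVec, hc]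
    simp only [Matrix.mulVec, dotProduct, Matrix.transpose_apply, mul_sub]
    rw [← Finset.sum_sub_distrib]
  have key : ∀ t : ℝ, t * c ≤ t ^ 2 / 2 * (∑ i, ((F * X) i j) ^ 2)
      + lam * (|betaHat j + t| - |betaHat j|) := by
    intro t
    have hm := hmin (betaHat + t • (Pi.single j 1 : Fin p → ℝ))
    have hmv : ∀ i, (F * X).mulVec (betaHat + t • (Pi.single j 1 : Fin p → ℝ)) i
        = (F * X).mulVec betaHat i + t * (F * X) i j := by
      intro i
      rw [Matrix.mulVec_add, Matrix.mulVec_smul]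
      simp [Matrix.mulVec_single]
    have hsum1 : ∑ i, (F.mulVec Y i - (F * X).mulVec (betaHat + t • (Pi.single j 1 : Fin p → ℝ)) i) ^ 2
        = ∑ i, (F.mulVec Y i - (F * X).mulVec betaHat i) ^ 2 - 2 * t * c
          + t ^ 2 * ∑ i, ((F * X) i j) ^ 2 := by
      rw [hc, Finset.mul_sum, Finset.mul_sum, ← Finset.sum_sub_distrib,
        ← Finset.sum_add_distrib]
      apply Finset.sum_congr rfl
      intro i _
      rw [hmv i]
      ring
    have hsum2 : ∑ k, |(betaHat + t • (Pi.single j 1 : Fin p → ℝ)) k|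
        = ∑ k, |betaHat k| + (|betaHat j + t| - |betaHat j|) := by
      have e1 : ∑ k, |(betaHat + t • (Pi.single j 1 : Fin p → ℝ)) k|
          = |betaHat j + t| + ∑ k ∈ Finset.univ.erase j, |betaHat k| := by
        rw [← Finset.add_sum_erase _ _ (Finset.mem_univ j)]
        congr 1
        · simp [Pi.single_eq_same (M := fun _ : Fin p => ℝ)]
        · apply Finset.sum_congr rfl
          intro k hk
          have hkj : k ≠ j := Finset.ne_of_mem_erase hk
          simp [Pi.single_eq_of_ne hkj]
      have e2 : ∑ k, |betaHat k|
          = |betaHat j| + ∑ k ∈ Finset.univ.erase j, |betaHat k| :=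
        (Finset.add_sum_erase _ _ (Finset.mem_univ j)).symm
      rw [e1, e2]
      ring
    rw [hsum1, hsum2] at hm
    nlinarith [hm]
  have hM : (0:ℝ) ≤ ∑ i, ((F * X) i j) ^ 2 := by positivity
  have := lasso_kkt_aux c (∑ i, ((F * X) i j) ^ 2) lam (betaHat j) hM hlam key
  rw [hCc]
  exact this
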